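/- The von Neumann entropy is strictly concave on density matrices: if ρ and ρ̄ are n×n density matrices with ρ ≠ ρ̄ and t ∈ (0,1), then S(t ρ + (1−t) ρ̄) > t S(ρ) + (1−t) S(ρ̄). -/

import Mathlib

open scoped ComplexOrder InnerProductSpace

/-- The function `s(p) = −p·log p` for `p > 0`, `s(p) = 0` otherwise. -/
noncomputable def sfun (p : ℝ) : ℝ := if 0 < p then -p * Real.log p else 0


lemma aux_eigen {n : ℕ} {A : Matrix (Fin n) (Fin n) ℂ} (hA : A.IsHermitian) (j : Fin n) :
    Matrix.toEuclideanLin A (hA.eigenvectorBasis j)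
      = ((hA.eigenvalues j : ℂ)) • hA.eigenvectorBasis j := by
  ext i
  have := congrFun (hA.mulVec_eigenvectorBasis j) i
  simpa [Matrix.toEuclideanLin_apply, Complex.real_smul] using this

lemma aux_decomp {n : ℕ} {A : Matrix (Fin n) (Fin n) ℂ} (hA : A.IsHermitian)
    (v : EuclideanSpace ℂ (Fin n)) :
    Matrix.toEuclideanLin A v
      = ∑ j, ⟪hA.eigenvectorBasis j, v⟫_ℂ • ((hA.eigenvalues j : ℂ) • hA.eigenvectorBasis j) := by
  conv_lhs => rw [← hA.eigenvectorBasis.sum_repr' v, map_sum]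
  refine Finset.sum_congr rfl fun j _ => ?_
  rw [map_smul, aux_eigen hA]

lemma aux_expand {n : ℕ} {A : Matrix (Fin n) (Fin n) ℂ} (hA : A.IsHermitian)
    (v : EuclideanSpace ℂ (Fin n)) :
    ⟪v, Matrix.toEuclideanLin A v⟫_ℂ
      = ((∑ j, ‖⟪hA.eigenvectorBasis j, v⟫_ℂ‖ ^ 2 * hA.eigenvalues j : ℝ) : ℂ) := by
  rw [aux_decomp hA, inner_sum]
  push_cast
  refine Finset.sum_congr rfl fun j _ => ?_
  rw [inner_smul_right, inner_smul_right, ← inner_conj_symm v (hA.eigenvectorBasis j)]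
  have hcc : ⟪hA.eigenvectorBasis j, v⟫_ℂ * (starRingEnd ℂ) ⟪hA.eigenvectorBasis j, v⟫_ℂ
      = ((‖⟪hA.eigenvectorBasis j, v⟫_ℂ‖ ^ 2 : ℝ) : ℂ) := by
    rw [Complex.mul_conj, Complex.normSq_eq_norm_sq]
  push_cast at hcc ⊢
  linear_combination (hA.eigenvalues j : ℂ) * hcc

lemma aux_parseval {n : ℕ} (b : OrthonormalBasis (Fin n) ℂ (EuclideanSpace ℂ (Fin n)))
    (v : EuclideanSpace ℂ (Fin n)) :
    ∑ j, ‖⟪b j, v⟫_ℂ‖ ^ 2 = ‖v‖ ^ 2 := by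
  have h := b.sum_inner_mul_inner v v
  have h2 : ∀ j, ⟪v, b j⟫_ℂ * ⟪b j, v⟫_ℂ = ((‖⟪b j, v⟫_ℂ‖ ^ 2 : ℝ) : ℂ) := by
    intro j
    rw [← inner_conj_symm v (b j), RCLike.conj_mul]
    norm_cast
  rw [Finset.sum_congr rfl fun j _ => h2 j, inner_self_eq_norm_sq_to_K] at h
  simpa [← Complex.ofReal_pow] using congrArg Complex.re h

/-- If all eigenvalues whose eigenvector is not orthogonal to `v` are equal to `c`,
then `v` is an eigenvector with eigenvalue `c`. -/
lemma aux_eigvec {n : ℕ} {A : Matrix (Fin n) (Fin n) ℂ} (hA : A.IsHermitian)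
    (v : EuclideanSpace ℂ (Fin n)) (c : ℝ)
    (h : ∀ j, ⟪hA.eigenvectorBasis j, v⟫_ℂ ≠ 0 → hA.eigenvalues j = c) :
    Matrix.toEuclideanLin A v = ((c : ℝ) : ℂ) • v := by
  rw [aux_decomp hA]
  conv_rhs => rw [← hA.eigenvectorBasis.sum_repr' v]
  rw [Finset.smul_sum]
  refine Finset.sum_congr rfl fun j _ => ?_
  by_cases hj : ⟪hA.eigenvectorBasis j, v⟫_ℂ = 0
  · simp [hj]
  · rw [h j hj, smul_comm]

/-- An `n×n` complex matrix is a density matrix if it is Hermitian positive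
semidefinite with trace one. -/
def IsDensityMatrix {n : ℕ} (ρ : Matrix (Fin n) (Fin n) ℂ) : Prop :=
  ρ.PosSemidef ∧ ρ.trace = 1

/-- The von Neumann entropy `S(ρ) = Σ_k s(λ_k)` of a Hermitian matrix, where the
`λ_k` are its eigenvalues listed with multiplicity (junk value `0` otherwise). -/
noncomputable def vnEntropy {n : ℕ} (ρ : Matrix (Fin n) (Fin n) ℂ) : ℝ :=
  if h : ρ.IsHermitian then ∑ k, sfun (h.eigenvalues k) else 0

/-- the von Neumann entropy is strictly concave on density matrices:
if `ρ ≠ ρ̄` are density matrices and `t ∈ (0,1)`, then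
`S(tρ + (1−t)ρ̄) > t·S(ρ) + (1−t)·S(ρ̄)`. -/
lemma sfun_eq {p : ℝ} (hp : 0 ≤ p) : sfun p = Real.negMulLog p := by
  rcases hp.eq_or_lt with h | h
  · simp [sfun, ← h, Real.negMulLog]
  · simp [sfun, h, Real.negMulLog]


theorem vnEntropy_strictConcave
    {n : ℕ} (ρ ρbar : Matrix (Fin n) (Fin n) ℂ)
    (hρ : IsDensityMatrix ρ) (hρbar : IsDensityMatrix ρbar) (hne : ρ ≠ ρbar)
    (t : ℝ) (ht : t ∈ Set.Ioo (0 : ℝ) 1) :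
    t * vnEntropy ρ + (1 - t) * vnEntropy ρbar
      < vnEntropy (((t : ℝ) : ℂ) • ρ + (((1 - t : ℝ)) : ℂ) • ρbar) := by
  obtain ⟨ht0, ht1⟩ := ht
  have h1t : (0:ℝ) < 1 - t := by linarith
  have hρH : ρ.IsHermitian := hρ.1.1
  have hbH : ρbar.IsHermitian := hρbar.1.1
  set σ : Matrix (Fin n) (Fin n) ℂ := ((t : ℝ) : ℂ) • ρ + (((1 - t : ℝ)) : ℂ) • ρbar with hσdef
  have hσH : σ.IsHermitian := by
    show σ.conjTranspose = σ
    rw [hσdef]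
    simp [Matrix.conjTranspose_add, Matrix.conjTranspose_smul, hρH.eq, hbH.eq,
      Complex.star_def, Complex.conj_ofReal]
  set b := hσH.eigenvectorBasis with hb
  set μ := hσH.eigenvalues with hμ
  set wρ := hρH.eigenvectorBasis with hwρ
  set eρ := hρH.eigenvalues with heρ
  set wb := hbH.eigenvectorBasis with hwb
  set eb := hbH.eigenvalues with heb
  set W : Fin n → (Fin n ⊕ Fin n) → ℝ :=
    fun k => Sum.elim (fun j => t * ‖⟪wρ j, b k⟫_ℂ‖ ^ 2)
      (fun j => (1 - t) * ‖⟪wb j, b k⟫_ℂ‖ ^ 2) with hW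
  set x : Fin n ⊕ Fin n → ℝ := Sum.elim eρ eb with hx
  -- basic facts
  have hW0 : ∀ k u, 0 ≤ W k u := by
    rintro k (j | j) <;> simp [hW] <;> positivity
  have hx0 : ∀ u, x u ∈ Set.Ici (0:ℝ) := by
    rintro (j | j)
    · exact hρ.1.eigenvalues_nonneg j
    · exact hρbar.1.eigenvalues_nonneg j
  have hnorm : ∀ k, ‖(b k : EuclideanSpace ℂ (Fin n))‖ = 1 := fun k => b.orthonormal.1 k
  have hW1 : ∀ k, ∑ u, W k u = 1 := by
    intro k
    rw [hW]
    simp only [Fintype.sum_sum_type, Sum.elim_inl, Sum.elim_inr]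
    rw [← Finset.mul_sum, ← Finset.mul_sum, aux_parseval wρ (b k), aux_parseval wb (b k),
      hnorm k]
    ring
  -- the eigenvalue of σ as a convex combination
  have hsum : ∀ k, ∑ u, W k u • x u = μ k := by
    intro k
    have h1 : Matrix.toEuclideanLin σ (b k) = ((μ k : ℝ) : ℂ) • b k := by
      have := aux_eigen hσH k
      rw [← hb, ← hμ] at this
      exact this
    have h2 : ⟪b k, Matrix.toEuclideanLin σ (b k)⟫_ℂ = ((μ k : ℝ) : ℂ) := by
      rw [h1, inner_smul_right, inner_self_eq_norm_sq_to_K, hnorm k]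
      norm_num
    have h3 : ⟪b k, Matrix.toEuclideanLin σ (b k)⟫_ℂ
        = ((t : ℝ) : ℂ) * ⟪b k, Matrix.toEuclideanLin ρ (b k)⟫_ℂ
          + (((1 - t : ℝ)) : ℂ) * ⟪b k, Matrix.toEuclideanLin ρbar (b k)⟫_ℂ := by
      rw [hσdef, map_add, map_smul, map_smul, LinearMap.add_apply,
        LinearMap.smul_apply, LinearMap.smul_apply, inner_add_right,
        inner_smul_right, inner_smul_right]
    rw [h2, aux_expand hρH, aux_expand hbH, ← hwρ, ← heρ, ← hwb, ← heb] at h3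
    have h4 : μ k = t * (∑ j, ‖⟪wρ j, b k⟫_ℂ‖ ^ 2 * eρ j)
        + (1 - t) * (∑ j, ‖⟪wb j, b k⟫_ℂ‖ ^ 2 * eb j) := by
      exact_mod_cast h3
    rw [h4, hW, hx]
    simp only [Fintype.sum_sum_type, Sum.elim_inl, Sum.elim_inr, smul_eq_mul]
    rw [Finset.mul_sum, Finset.mul_sum]
    congr 1 <;> exact Finset.sum_congr rfl fun j _ => by ring
  -- Jensen
  have key : ∀ k, ∑ u, W k u • Real.negMulLog (x u) ≤ Real.negMulLog (μ k) := by
    intro k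
    rw [← hsum k]
    exact Real.concaveOn_negMulLog.le_map_sum (fun u _ => hW0 k u) (hW1 k)
      (fun u _ => hx0 u)
  -- entropy of σ
  have hμ0 : ∀ k, 0 ≤ μ k := by
    intro k
    rw [← hsum k]
    exact Finset.sum_nonneg fun u _ => smul_nonneg (hW0 k u) (hx0 u)
  have hRHS : vnEntropy σ = ∑ k, Real.negMulLog (μ k) := by
    rw [vnEntropy, dif_pos hσH]
    exact Finset.sum_congr rfl fun k _ => by rw [← hμ, sfun_eq (hμ0 k)]
  -- the left-hand side as a double sum
  have hcolρ : ∀ j, ∑ k, ‖⟪wρ j, b k⟫_ℂ‖ ^ 2 = 1 := by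
    intro j
    have h1 : ∀ k : Fin n, ‖⟪wρ j, b k⟫_ℂ‖ ^ 2 = ‖⟪b k, wρ j⟫_ℂ‖ ^ 2 := fun k => by
      rw [norm_inner_symm]
    rw [Finset.sum_congr rfl fun k _ => h1 k, aux_parseval b (wρ j), wρ.orthonormal.1 j]
    norm_num
  have hcolb : ∀ j, ∑ k, ‖⟪wb j, b k⟫_ℂ‖ ^ 2 = 1 := by
    intro j
    have h1 : ∀ k : Fin n, ‖⟪wb j, b k⟫_ℂ‖ ^ 2 = ‖⟪b k, wb j⟫_ℂ‖ ^ 2 := fun k => by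
      rw [norm_inner_symm]
    rw [Finset.sum_congr rfl fun k _ => h1 k, aux_parseval b (wb j), wb.orthonormal.1 j]
    norm_num
  have hLHS : t * vnEntropy ρ + (1 - t) * vnEntropy ρbar
      = ∑ k, ∑ u, W k u • Real.negMulLog (x u) := by
    rw [Finset.sum_comm]
    rw [vnEntropy, dif_pos hρH, vnEntropy, dif_pos hbH]
    simp only [Fintype.sum_sum_type, Sum.elim_inl, Sum.elim_inr, smul_eq_mul, hW, hx]
    have e1 : ∀ j : Fin n, ∑ k, t * ‖⟪wρ j, b k⟫_ℂ‖ ^ 2 * Real.negMulLog (eρ j)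
        = t * Real.negMulLog (eρ j) := by
      intro j
      rw [← Finset.sum_mul, ← Finset.mul_sum, hcolρ j]
      ring
    have e2 : ∀ j : Fin n, ∑ k, (1 - t) * ‖⟪wb j, b k⟫_ℂ‖ ^ 2 * Real.negMulLog (eb j)
        = (1 - t) * Real.negMulLog (eb j) := by
      intro j
      rw [← Finset.sum_mul, ← Finset.mul_sum, hcolb j]
      ring
    rw [Finset.sum_congr rfl fun j _ => e1 j, Finset.sum_congr rfl fun j _ => e2 j,
      ← Finset.mul_sum, ← Finset.mul_sum]
    rw [Finset.sum_congr rfl fun k _ => (sfun_eq (hρ.1.eigenvalues_nonneg k) : sfun (hρH.eigenvalues k) = _),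
      Finset.sum_congr rfl fun k _ => (sfun_eq (hρbar.1.eigenvalues_nonneg k) : sfun (hbH.eigenvalues k) = _)]
  -- strictness
  have hex : ∃ k, ∑ u, W k u • Real.negMulLog (x u) < Real.negMulLog (μ k) := by
    by_contra hc
    push_neg at hc
    have heq : ∀ k, Real.negMulLog (∑ u, W k u • x u) = ∑ u, W k u • Real.negMulLog (x u) := by
      intro k
      rw [hsum k]
      exact le_antisymm (hc k) (key k)
    have hpts : ∀ k, ∀ u, W k u ≠ 0 → x u = μ k := by
      intro k u hu
      have h := (Real.strictConcaveOn_negMulLog.map_sum_eq_iff'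
        (fun u _ => hW0 k u) (hW1 k) (fun u _ => hx0 u)).1 (heq k) u (Finset.mem_univ u) hu
      rw [hsum k] at h
      exact h
    have hev : ∀ k, Matrix.toEuclideanLin ρ (b k) = ((μ k : ℝ) : ℂ) • b k := by
      intro k
      apply aux_eigvec hρH
      intro j hj
      have hWne : W k (Sum.inl j) ≠ 0 := by
        simp only [hW, Sum.elim_inl]
        exact mul_ne_zero (ne_of_gt ht0) (pow_ne_zero _ (norm_ne_zero_iff.2 hj))
      have := hpts k (Sum.inl j) hWne
      simpa [hx, heρ] using this
    have hevb : ∀ k, Matrix.toEuclideanLin ρbar (b k) = ((μ k : ℝ) : ℂ) • b k := by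
      intro k
      apply aux_eigvec hbH
      intro j hj
      have hWne : W k (Sum.inr j) ≠ 0 := by
        simp only [hW, Sum.elim_inr]
        exact mul_ne_zero (ne_of_gt h1t) (pow_ne_zero _ (norm_ne_zero_iff.2 hj))
      have := hpts k (Sum.inr j) hWne
      simpa [hx, heb] using this
    apply hne
    have hlin : Matrix.toEuclideanLin ρ = Matrix.toEuclideanLin ρbar := by
      apply b.toBasis.ext
      intro k
      rw [OrthonormalBasis.coe_toBasis, hev k, hevb k]
    exact Matrix.toEuclideanLin.injective hlin
  calc t * vnEntropy ρ + (1 - t) * vnEntropy ρbar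
      = ∑ k, ∑ u, W k u • Real.negMulLog (x u) := hLHS
    _ < ∑ k, Real.negMulLog (μ k) :=
        Finset.sum_lt_sum (fun k _ => key k) (hex.imp fun k h => ⟨Finset.mem_univ k, h⟩)
    _ = vnEntropy σ := hRHS.symm
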